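/- Let B be a base of a matroid M such that no element of B is a minimum-weight element of any circuit of M that it belongs to (i.e., for every circuit C and every e ∈ B ∩ C, there exists c ∈ C with w(c) < w(e)). Then B is a maximum-weight base. -/

import Mathlib

open Classical Finset

/-- Weighted rank function of a matroid: maximum weight of an independent subset. -/
noncomputable def phi {α : Type*} (M : Matroid α) (w : α → ℝ) (A : Finset α) : ℝ :=
  sSup {x : ℝ | ∃ I : Finset α, ↑I ⊆ (A : Set α) ∧ M.Indep ↑I ∧ x = ∑ a ∈ I, w a}

/-- A circuit: a minimal dependent set. -/
def IsCircuit {α : Type*} (M : Matroid α) (C : Set α) : Prop :=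
  M.Dep C ∧ ∀ D ⊂ C, ¬ M.Dep D

/-- Every finite dependent set contains a circuit. -/
lemma exists_circuit_of_dep {α : Type*} {M : Matroid α} {X : Set α} (hX : M.Dep X)
    (hfin : X.Finite) : ∃ C, C ⊆ X ∧ IsCircuit M C := by
  classical
  set S : Finset (Finset α) := hfin.toFinset.powerset.filter (fun D => M.Dep ↑D) with hS
  have hXS : hfin.toFinset ∈ S := by
    simp [hS, Finset.mem_filter, hfin.coe_toFinset, hX]
  obtain ⟨D₀, hD₀S, hminc⟩ := S.exists_min_image Finset.card ⟨_, hXS⟩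
  rw [hS, Finset.mem_filter, Finset.mem_powerset] at hD₀S
  refine ⟨↑D₀, fun x hx => hfin.mem_toFinset.mp (hD₀S.1 hx), hD₀S.2, ?_⟩
  intro D hD hdep
  have hDfin : D.Finite := D₀.finite_toSet.subset hD.subset
  have hDf : hDfin.toFinset ∈ S := by
    rw [hS, Finset.mem_filter, Finset.mem_powerset]
    refine ⟨fun x hx => ?_, by rwa [hDfin.coe_toFinset]⟩
    exact hD₀S.1 (hD.subset (hDfin.mem_toFinset.mp hx))
  have hss : hDfin.toFinset ⊂ D₀ := by
    rw [← Finset.coe_ssubset, hDfin.coe_toFinset]; exact hD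
  exact absurd (hminc _ hDf) (not_le.mpr (Finset.card_lt_card hss))

theorem base_no_min_in_circuit_is_max {α : Type*} (M : Matroid α) (w : α → ℝ)
    (hw : ∀ a, 0 ≤ w a) (B : Finset α) (hB : M.IsBase ↑B)
    (hmin : ∀ C : Set α, IsCircuit M C → ∀ e ∈ B, e ∈ C → ∃ c ∈ C, w c < w e) :
    ∀ B' : Finset α, M.IsBase ↑B' → ∑ e ∈ B', w e ≤ ∑ e ∈ B, w e := by
  classical
  suffices h : ∀ n : ℕ, ∀ B' : Finset α, M.IsBase ↑B' → (B' \ B).card ≤ n →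
      ∑ e ∈ B', w e ≤ ∑ e ∈ B, w e by
    intro B' hB'
    exact h (B' \ B).card B' hB' le_rfl
  intro n
  induction n with
  | zero =>
    intro B' hB' hcard
    have : B' \ B = ∅ := Finset.card_eq_zero.mp (Nat.le_zero.mp hcard)
    have hsub : B' ⊆ B := by
      intro x hx
      by_contra hxB
      exact absurd (Finset.mem_sdiff.mpr ⟨hx, hxB⟩) (by simp [this])
    have : (B' : Set α) = ↑B := hB'.eq_of_subset_isBase hB (by exact_mod_cast hsub)
    rw [Finset.coe_inj.mp this]
  | succ n ih =>
    intro B' hB' hcard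
    by_cases hBB' : B' = B
    · rw [hBB']
    -- find f ∈ B \ B'
    obtain ⟨f, hfB, hfB'⟩ : ∃ f ∈ B, f ∉ B' := by
      by_contra hcon
      push_neg at hcon
      have hsub : (B : Set α) ⊆ ↑B' := by exact_mod_cast hcon
      exact hBB' (Finset.coe_inj.mp (hB.eq_of_subset_isBase hB' hsub)).symm
    have hfE : f ∈ M.E := hB.subset_ground (by exact_mod_cast hfB)
    -- fundamental-type circuit
    have hdep : M.Dep (insert f ↑B') := hB'.insert_dep ⟨hfE, by exact_mod_cast hfB'⟩
    obtain ⟨C, hCsub, hC⟩ := exists_circuit_of_dep hdep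
      ((B'.finite_toSet.insert f))
    have hCE : C ⊆ M.E := hC.1.2
    have hfC : f ∈ C := by
      by_contra hfC
      have : C ⊆ ↑B' := fun x hx => ((Set.mem_insert_iff.mp (hCsub hx)).resolve_left
        (fun h => hfC (h ▸ hx)))
      exact hC.1.1 (hB'.indep.subset this)
    -- minimum weight element of C
    have hCfin : C.Finite := (B'.finite_toSet.insert f).subset hCsub
    have hCne : hCfin.toFinset.Nonempty := ⟨f, hCfin.mem_toFinset.mpr hfC⟩
    obtain ⟨c₀, hc₀mem, hc₀min⟩ := hCfin.toFinset.exists_min_image w hCne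
    rw [hCfin.mem_toFinset] at hc₀mem
    have hc₀min' : ∀ c ∈ C, w c₀ ≤ w c := fun c hc => hc₀min c (hCfin.mem_toFinset.mpr hc)
    have hc₀B : c₀ ∉ B := by
      intro hc₀B
      obtain ⟨c, hcC, hcw⟩ := hmin C hC c₀ hc₀B hc₀mem
      exact absurd (hc₀min' c hcC) (not_le.mpr hcw)
    have hc₀f : c₀ ≠ f := fun h => hc₀B (h ▸ hfB)
    have hc₀B' : c₀ ∈ B' := by
      have := (Set.mem_insert_iff.mp (hCsub hc₀mem)).resolve_left hc₀f
      exact_mod_cast this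
    have hwc₀f : w c₀ < w f := by
      obtain ⟨c, hcC, hcw⟩ := hmin C hC f hfB hfC
      exact lt_of_le_of_lt (hc₀min' c hcC) hcw
    -- key independence claim
    set I : Set α := ↑B' \ {c₀} with hI
    have hIindep : M.Indep I := hB'.indep.subset Set.diff_subset
    have hfI : f ∉ I := fun h => hfB' (by exact_mod_cast h.1)
    have hins : M.Indep (insert f I) := by
      rw [hIindep.insert_indep_iff_of_notMem hfI]
      refine ⟨hfE, fun hfcl => ?_⟩
      have hIE : I ⊆ M.E := hIindep.subset_ground
      have hCc₀ : C \ {c₀} ⊆ M.closure I := by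
        rintro x ⟨hxC, hxc₀⟩
        rcases Set.mem_insert_iff.mp (hCsub hxC) with rfl | hxB'
        · exact hfcl
        · exact M.subset_closure I hIE ⟨hxB', hxc₀⟩
      have hc₀cl : c₀ ∈ M.closure (C \ {c₀}) := by
        have hCdiff : M.Indep (C \ {c₀}) := by
          have hss : C \ {c₀} ⊂ C := Set.sdiff_singleton_ssubset.mpr hc₀mem
          exact (M.not_dep_iff (hss.subset.trans hCE)).mp (hC.2 _ hss)
        have : M.Dep (insert c₀ (C \ {c₀})) := by
          rw [Set.insert_diff_singleton, Set.insert_eq_self.mpr hc₀mem]; exact hC.1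
        exact (hCdiff.insert_dep_iff.mp this).1
      have hc₀I : c₀ ∈ M.closure I :=
        (M.closure_subset_closure_of_subset_closure hCc₀) hc₀cl
      have hB'cl : (B' : Set α) ⊆ M.closure I := by
        intro x hx
        by_cases hxc : x = c₀
        · exact hxc ▸ hc₀I
        · exact M.subset_closure I hIE ⟨hx, hxc⟩
      have hground : M.E ⊆ M.closure I := by
        rw [← hB'.closure_eq]
        exact M.closure_subset_closure_of_subset_closure hB'cl
      have hIbase : M.IsBase I := hIindep.isBase_of_ground_subset_closure hground
      have : I = ↑B' := hIbase.eq_of_subset_indep hB'.indep Set.diff_subset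
      have : c₀ ∈ I := this ▸ (by exact_mod_cast hc₀B' : c₀ ∈ (B' : Set α))
      exact this.2 rfl
    -- exchange
    have hB'' : M.IsBase (insert f ((B' : Set α) \ {c₀})) :=
      hB'.exchange_isBase_of_indep (by exact_mod_cast hfB') hins
    set B₂ : Finset α := insert f (B'.erase c₀) with hB₂
    have hB₂coe : (B₂ : Set α) = insert f ((B' : Set α) \ {c₀}) := by
      simp [hB₂, Finset.coe_insert, Finset.coe_erase]
    have hB₂base : M.IsBase ↑B₂ := hB₂coe ▸ hB''
    -- card bound
    have hc₀sd : c₀ ∈ B' \ B := Finset.mem_sdiff.mpr ⟨hc₀B', hc₀B⟩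
    have hsd : B₂ \ B = (B' \ B).erase c₀ := by
      ext x
      simp only [hB₂, Finset.mem_sdiff, Finset.mem_insert, Finset.mem_erase]
      constructor
      · rintro ⟨rfl | ⟨hx1, hx2⟩, hx3⟩
        · exact absurd hfB hx3
        · exact ⟨hx1, hx2, hx3⟩
      · rintro ⟨hx1, hx2, hx3⟩
        exact ⟨Or.inr ⟨hx1, hx2⟩, hx3⟩
    have hcard₂ : (B₂ \ B).card ≤ n := by
      rw [hsd, Finset.card_erase_of_mem hc₀sd]
      have : 1 ≤ (B' \ B).card := Finset.card_pos.mpr ⟨c₀, hc₀sd⟩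
      omega
    -- weight comparison
    have hfnotin : f ∉ B'.erase c₀ := fun h => hfB' (Finset.mem_of_mem_erase h)
    have hsum : ∑ e ∈ B₂, w e = w f + (∑ e ∈ B', w e - w c₀) := by
      rw [hB₂, Finset.sum_insert hfnotin]
      have := Finset.sum_erase_add B' w hc₀B'
      linarith
    have := ih B₂ hB₂base hcard₂
    rw [hsum] at this
    linarith
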